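/- (Conditional-probability well-definedness) If Φ_i^v(E') = Φ_i^v(F') for E', F' ⊆ E_{<i}, then Pr[S⇝v | E' present, E_{<i}\E' absent] = Pr[S⇝v | F' present, E_{<i}\F' absent]. -/

import Mathlib

open scoped Classical
open Finset

noncomputable section

/-- `inc src tgt e x` : edge `e` is incident to vertex `x`. -/
def inc {V : Type*} (src tgt : ℕ → V) (e : ℕ) (x : V) : Prop := src e = x ∨ tgt e = x

/-- Reachability in the subgraph with edge set `A`. -/
def Reach {V : Type*} (src tgt : ℕ → V) (A : Finset ℕ) (x y : V) : Prop :=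
  Relation.ReflTransGen (fun a b => ∃ e ∈ A, src e = a ∧ tgt e = b) x y

/-- `v` is reachable from some vertex of `S` in the subgraph with edge set `A`. -/
def SReach {V : Type*} (src tgt : ℕ → V) (A : Finset ℕ) (S : Finset V) (v : V) : Prop :=
  ∃ s ∈ S, Reach src tgt A s v

/-- Probability that exactly the edges in `X` (among `e_0,…,e_{m-1}`) are present. -/
def prW (p : ℕ → ℝ) (m : ℕ) (X : Finset ℕ) : ℝ :=
  (∏ e ∈ X, p e) * ∏ e ∈ Finset.range m \ X, (1 - p e)

/-- Probability that `v` is reachable from the seed set `S`. -/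
def probReach {V : Type*} (src tgt : ℕ → V) (p : ℕ → ℝ) (m : ℕ) (S : Finset V) (v : V) : ℝ :=
  ∑ X ∈ (Finset.range m).powerset, if SReach src tgt X S v then prW p m X else 0

/-- Conditional probability of `event` given that all edges in `A` are present and
all edges in `B` are absent. -/
def condP (p : ℕ → ℝ) (m : ℕ) (A B : Finset ℕ) (event : Finset ℕ → Prop) : ℝ :=
  (∑ X ∈ (Finset.range m).powerset,
      if A ⊆ X ∧ X ∩ B = ∅ ∧ event X then prW p m X else 0) /
  (∑ X ∈ (Finset.range m).powerset, if A ⊆ X ∧ X ∩ B = ∅ then prW p m X else 0)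

/-- The frontier `W_i`: vertices incident both to an edge of `E_{<i}` and to an edge of
`E_{≥ i}` (as a set). -/
def frontSet {V : Type*} (src tgt : ℕ → V) (m i : ℕ) : Set V :=
  {x | (∃ e ∈ Finset.range i, inc src tgt e x) ∧
       ∃ e ∈ Finset.range m \ Finset.range i, inc src tgt e x}

/-- The frontier `W_i` as a finset. -/
def front {V : Type*} [Fintype V] (src tgt : ℕ → V) (m i : ℕ) : Finset V :=
  Finset.univ.filter fun x =>
    (∃ e ∈ Finset.range i, inc src tgt e x) ∧
    ∃ e ∈ Finset.range m \ Finset.range i, inc src tgt e x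

/-- The shared transversal configuration `Ψ_i(A)`: the set of frontier vertices reachable
from `S`, together with the reachability relation among unreached frontier vertices. -/
def Psi {V : Type*} [Fintype V] (src tgt : ℕ → V) (m : ℕ) (S : Finset V) (i : ℕ)
    (A : Finset ℕ) : Finset V × Finset (V × V) :=
  ((front src tgt m i).filter fun x => SReach src tgt A S x,
   ((front src tgt m i) ×ˢ (front src tgt m i)).filter fun q =>
     ¬ SReach src tgt A S q.1 ∧ Reach src tgt A q.1 q.2)

/-- The transversal configuration `Φ_i^v(A)`: the sets `W_i^{S⇝}`, `W_i^{⇝v}`, the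
reachability matrix on the remaining rows/columns (with extra column `v`), and the
entry `Φ_{S,v}`. -/
def Phi {V : Type*} [Fintype V] (src tgt : ℕ → V) (m : ℕ) (S : Finset V) (i : ℕ) (v : V)
    (A : Finset ℕ) : Finset V × Finset V × Finset (V × V) × Prop :=
  ((front src tgt m i).filter fun x => SReach src tgt A S x,
   (front src tgt m i).filter fun x => Reach src tgt A x v,
   (((front src tgt m i) ∪ {v}) ×ˢ ((front src tgt m i) ∪ {v})).filter fun q =>
     (q.1 ∈ front src tgt m i ∧ ¬ SReach src tgt A S q.1) ∧
     (q.2 = v ∨ (q.2 ∈ front src tgt m i ∧ ¬ Reach src tgt A q.2 v)) ∧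
     Reach src tgt A q.1 q.2,
   SReach src tgt A S v)

/-- Probability that the shared transversal configuration `Ψ` appears at level `i`. -/
def PrPsi {V : Type*} [Fintype V] (src tgt : ℕ → V) (p : ℕ → ℝ) (m : ℕ) (S : Finset V)
    (i : ℕ) (Ψ : Finset V × Finset (V × V)) : ℝ :=
  ∑ A ∈ (Finset.range i).powerset,
    if Psi src tgt m S i A = Ψ then
      (∏ e ∈ A, p e) * ∏ e ∈ Finset.range i \ A, (1 - p e)
    else 0

/-- `IsWalk src tgt A x y es`: `es` is a directed walk from `x` to `y` using edges in `A`. -/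
def IsWalk {V : Type*} (src tgt : ℕ → V) (A : Finset ℕ) : V → V → List ℕ → Prop
  | x, y, [] => x = y
  | x, y, e :: es => e ∈ A ∧ src e = x ∧ IsWalk src tgt A (tgt e) y es


section Aux
variable {V : Type*} {src tgt : ℕ → V} {A B : Finset ℕ}

lemma isWalk_of_mem : ∀ {es : List ℕ} {x y : V}, IsWalk src tgt A x y es →
    (∀ e ∈ es, e ∈ B) → IsWalk src tgt B x y es
  | [], x, y, h, _ => h
  | e :: es, x, y, ⟨_, hsrc, hw⟩, hmem =>
    ⟨hmem e List.mem_cons_self, hsrc, isWalk_of_mem hw fun f hf => hmem f (List.mem_cons_of_mem _ hf)⟩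

lemma isWalk_mem : ∀ {es : List ℕ} {x y : V}, IsWalk src tgt A x y es → ∀ e ∈ es, e ∈ A
  | e :: es, x, y, ⟨he, _, hw⟩, f, hf => by
    rcases List.mem_cons.mp hf with h | h
    · exact h ▸ he
    · exact isWalk_mem hw f h

lemma isWalk_reach : ∀ {es : List ℕ} {x y : V}, IsWalk src tgt A x y es → Reach src tgt A x y
  | [], x, y, h => h ▸ Relation.ReflTransGen.refl
  | e :: es, x, y, ⟨he, hsrc, hw⟩ =>
    Relation.ReflTransGen.head ⟨e, he, hsrc, rfl⟩ (isWalk_reach hw)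

lemma isWalk_append' : ∀ {l1 l2 : List ℕ} {x z y : V}, IsWalk src tgt A x z l1 →
    IsWalk src tgt A z y l2 → IsWalk src tgt A x y (l1 ++ l2)
  | [], l2, x, z, y, h1, h2 => h1 ▸ h2
  | e :: l1, l2, x, z, y, ⟨he, hsrc, hw⟩, h2 => ⟨he, hsrc, isWalk_append' hw h2⟩


lemma reach_isWalk {x y : V} (h : Reach src tgt A x y) : ∃ es, IsWalk src tgt A x y es := by
  induction h with
  | refl => exact ⟨[], rfl⟩
  | tail _ hstep ih =>
    obtain ⟨es, hes⟩ := ih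
    obtain ⟨e, he, hsrc, htgt⟩ := hstep
    refine ⟨es ++ [e], isWalk_append' hes ?_⟩
    show IsWalk src tgt A _ _ [e]
    simp only [IsWalk]
    exact ⟨he, hsrc, htgt⟩

lemma isWalk_append : ∀ {l1 l2 : List ℕ} {x y : V}, IsWalk src tgt A x y (l1 ++ l2) →
    ∃ z, IsWalk src tgt A x z l1 ∧ IsWalk src tgt A z y l2
  | [], l2, x, y, h => ⟨x, rfl, h⟩
  | e :: l1, l2, x, y, ⟨he, hsrc, hw⟩ => by
    obtain ⟨z, h1, h2⟩ := isWalk_append hw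
    exact ⟨z, ⟨he, hsrc, h1⟩, h2⟩

lemma isWalk_getLast : ∀ {es : List ℕ} {x y : V} (hne : es ≠ []), IsWalk src tgt A x y es →
    tgt (es.getLast hne) = y := by
  intro es
  induction es with
  | nil => simp
  | cons e es ih =>
    intro x y hne hw
    obtain ⟨he, hsrc, hw'⟩ := hw
    cases es with
    | nil => simpa using show tgt e = y from hw'
    | cons f es' => simpa [List.getLast_cons] using ih (by simp) hw' 


end Aux

section Key
variable {V : Type*} [Fintype V] {src tgt : ℕ → V} {m i : ℕ} {S : Finset V} {v : V}
variable {E₁ E₂ Y : Finset ℕ}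

lemma reach_mono (h : A ⊆ B) {x y : V} (hr : Reach src tgt A x y) : Reach src tgt B x y := by
  induction hr with
  | refl => exact Relation.ReflTransGen.refl
  | tail _ hstep ih =>
    obtain ⟨e, he, h1, h2⟩ := hstep
    exact Relation.ReflTransGen.tail ih ⟨e, h he, h1, h2⟩

lemma dropWhile_eq_cons_head_false {α : Type*} (p : α → Bool) :
    ∀ (l : List α) {a : α} {t : List α}, l.dropWhile p = a :: t → p a = false := by
  intro l
  induction l with
  | nil => intro a t h; simp at h
  | cons b l ih =>
    intro a t h
    rw [List.dropWhile_cons] at h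
    by_cases hb : p b
    · rw [if_pos hb] at h; exact ih h
    · rw [if_neg hb] at h
      cases h
      simpa using hb

lemma key_trans
    (hE₁ : E₁ ⊆ Finset.range i) (hY : Y ⊆ Finset.range m \ Finset.range i)
    (h1 : ∀ x ∈ front src tgt m i, SReach src tgt E₁ S x → SReach src tgt E₂ S x)
    (h2 : ∀ x ∈ front src tgt m i, Reach src tgt E₁ x v → Reach src tgt E₂ x v)
    (h3 : ∀ x y, x ∈ front src tgt m i → ¬ SReach src tgt E₁ S x →
      (y = v ∨ (y ∈ front src tgt m i ∧ ¬ Reach src tgt E₁ y v)) →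
      Reach src tgt E₁ x y → Reach src tgt E₂ x y)
    (h4 : SReach src tgt E₁ S v → SReach src tgt E₂ S v) :
    ∀ n (es : List ℕ) (x : V), es.length ≤ n → IsWalk src tgt (E₁ ∪ Y) x v es →
      (x ∈ S ∨ x ∈ front src tgt m i) → SReach src tgt (E₂ ∪ Y) S x →
      SReach src tgt (E₂ ∪ Y) S v := by
  have hmono2 : E₂ ⊆ E₂ ∪ Y := Finset.subset_union_left
  have hmonoY : Y ⊆ E₂ ∪ Y := Finset.subset_union_right
  have hfront : ∀ c : V, (∃ e ∈ Finset.range i, inc src tgt e c) →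
      (∃ e ∈ Finset.range m \ Finset.range i, inc src tgt e c) → c ∈ front src tgt m i := by
    intro c hl hh
    simp only [front, Finset.mem_filter, Finset.mem_univ, true_and]
    exact ⟨hl, hh⟩
  intro n
  induction n using Nat.strong_induction_on with
  | _ n IH =>
  intro es x hlen hwalk hx hSx
  set q : ℕ → Bool := fun e => decide (e ∈ E₁) with hq
  have hsplit : es.takeWhile q ++ es.dropWhile q = es := List.takeWhile_append_dropWhile
  obtain ⟨c, hwσ, hwrest⟩ := isWalk_append (l1 := es.takeWhile q) (l2 := es.dropWhile q)
    (by rw [hsplit]; exact hwalk)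
  have hσE₁ : IsWalk src tgt E₁ x c (es.takeWhile q) :=
    isWalk_of_mem hwσ (fun f hf => by
      have := List.mem_takeWhile_imp hf
      simpa [hq] using this)
  have hreachxc : Reach src tgt E₁ x c := isWalk_reach hσE₁
  cases hdw : es.dropWhile q with
  | nil =>
    rw [hdw] at hwrest
    have hcv : c = v := hwrest
    subst hcv
    rcases hx with hxS | hxF
    · obtain ⟨s, hs, hr⟩ := h4 ⟨x, hxS, hreachxc⟩
      exact ⟨s, hs, reach_mono hmono2 hr⟩
    · by_cases hSE : SReach src tgt E₁ S x
      · obtain ⟨s, hs, hr⟩ := hSE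
        obtain ⟨s', hs', hr'⟩ := h4 ⟨s, hs, hr.trans hreachxc⟩
        exact ⟨s', hs', reach_mono hmono2 hr'⟩
      · obtain ⟨s, hs, hr⟩ := hSx
        exact ⟨s, hs, hr.trans (reach_mono hmono2 (h2 x hxF hreachxc))⟩
  | cons e rest' =>
    rw [hdw] at hwrest
    have hrest_struct : e ∈ E₁ ∪ Y ∧ src e = c ∧ IsWalk src tgt (E₁ ∪ Y) (tgt e) v rest' := hwrest
    have he_notE₁ : ¬ e ∈ E₁ := by
      have h5 := dropWhile_eq_cons_head_false q es hdw
      simpa [hq] using h5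
    have heY : e ∈ Y := by
      rcases Finset.mem_union.mp hrest_struct.1 with h | h
      · exact absurd h he_notE₁
      · exact h
    have hsrc_e : src e = c := hrest_struct.2.1
    -- second split : maximal Y-prefix of (e :: rest')
    set r : ℕ → Bool := fun f => decide (f ∈ Y) with hr_def
    have hsplit2 : (e :: rest').takeWhile r ++ (e :: rest').dropWhile r = e :: rest' :=
      List.takeWhile_append_dropWhile
    obtain ⟨d, hwτ, hwrest2⟩ := isWalk_append
      (l1 := (e :: rest').takeWhile r) (l2 := (e :: rest').dropWhile r)
      (by rw [hsplit2]; exact hwrest)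
    have hτY : IsWalk src tgt Y c d ((e :: rest').takeWhile r) :=
      isWalk_of_mem hwτ (fun g hg => by
        have := List.mem_takeWhile_imp hg
        simpa [hr_def] using this)
    have hreachcd : Reach src tgt (E₂ ∪ Y) c d := reach_mono hmonoY (isWalk_reach hτY)
    have hre : r e = true := by simp [hr_def, heY]
    have hτeq : (e :: rest').takeWhile r = e :: rest'.takeWhile r := by
      rw [List.takeWhile_cons_of_pos hre]
    have hrest2eq : (e :: rest').dropWhile r = rest'.dropWhile r := by
      rw [List.dropWhile_cons_of_pos hre]
    -- length bookkeeping
    have hlen_es : (es.takeWhile q).length + (e :: rest').length = es.length := by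
      have h6 := congrArg List.length hsplit
      rw [List.length_append, hdw] at h6
      exact h6
    have hlen2 : ((e :: rest').dropWhile r).length < es.length := by
      rw [hrest2eq]
      have := (List.dropWhile_sublist (l := rest') r).length_le
      simp only [List.length_cons] at hlen_es
      omega
    -- S-reach of c in E₂ ∪ Y (or escape to the goal)
    have hSc : SReach src tgt (E₂ ∪ Y) S c ∨ SReach src tgt (E₂ ∪ Y) S v := by
      cases htk : es.takeWhile q with
      | nil =>
        rw [htk] at hwσ
        have hxc : x = c := hwσ
        exact Or.inl (hxc ▸ hSx)
      | cons g σ' =>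
        rw [htk] at hσE₁
        have hgl : tgt ((g :: σ').getLast (by simp)) = c := isWalk_getLast _ hσE₁
        have hglmem : (g :: σ').getLast (by simp) ∈ E₁ :=
          isWalk_mem hσE₁ _ (List.getLast_mem _)
        have hcfront : c ∈ front src tgt m i := by
          refine hfront c ⟨(g :: σ').getLast (by simp), hE₁ hglmem, Or.inr hgl⟩
            ⟨e, hY heY, Or.inl hsrc_e⟩
        rcases hx with hxS | hxF
        · obtain ⟨s, hs, hr2⟩ := h1 c hcfront ⟨x, hxS, hreachxc⟩
          exact Or.inl ⟨s, hs, reach_mono hmono2 hr2⟩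
        · by_cases hSE : SReach src tgt E₁ S x
          · obtain ⟨s, hs, hr2⟩ := hSE
            obtain ⟨s', hs', hr'⟩ := h1 c hcfront ⟨s, hs, hr2.trans hreachxc⟩
            exact Or.inl ⟨s', hs', reach_mono hmono2 hr'⟩
          · by_cases hcv : Reach src tgt E₁ c v
            · obtain ⟨s, hs, hr2⟩ := hSx
              exact Or.inr ⟨s, hs, hr2.trans
                (reach_mono hmono2 (h2 x hxF (hreachxc.trans hcv)))⟩
            · obtain ⟨s, hs, hr2⟩ := hSx
              exact Or.inl ⟨s, hs, hr2.trans (reach_mono hmono2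
                (h3 x c hxF hSE (Or.inr ⟨hcfront, hcv⟩) hreachxc))⟩
    rcases hSc with hSc | hdone
    swap
    · exact hdone
    have hSd : SReach src tgt (E₂ ∪ Y) S d := by
      obtain ⟨s, hs, hr2⟩ := hSc
      exact ⟨s, hs, hr2.trans hreachcd⟩
    cases hdw2 : (e :: rest').dropWhile r with
    | nil =>
      rw [hdw2] at hwrest2
      have hdv : d = v := hwrest2
      exact hdv ▸ hSd
    | cons f rest2' =>
      rw [hdw2] at hwrest2
      have hrest2_struct : f ∈ E₁ ∪ Y ∧ src f = d ∧
          IsWalk src tgt (E₁ ∪ Y) (tgt f) v rest2' := hwrest2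
      have hf_notY : ¬ f ∈ Y := by
        have h5 := dropWhile_eq_cons_head_false r (e :: rest') hdw2
        simpa [hr_def] using h5
      have hfE₁ : f ∈ E₁ := by
        rcases Finset.mem_union.mp hrest2_struct.1 with h | h
        · exact h
        · exact absurd h hf_notY
      have hglτ : tgt (((e :: rest').takeWhile r).getLast (by rw [hτeq]; simp)) = d :=
        isWalk_getLast _ hτY
      have hglτY : ((e :: rest').takeWhile r).getLast (by rw [hτeq]; simp) ∈ Y :=
        isWalk_mem hτY _ (List.getLast_mem _)
      have hdfront : d ∈ front src tgt m i :=
        hfront d ⟨f, hE₁ hfE₁, Or.inl hrest2_struct.2.1⟩ ⟨_, hY hglτY, Or.inr hglτ⟩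
      exact IH ((f :: rest2').length)
        (by rw [← hdw2]; exact lt_of_lt_of_le hlen2 hlen)
        (f :: rest2') d le_rfl hwrest2 (Or.inr hdfront) hSd

end Key


section KeyIff
variable {V : Type*} [Fintype V] {src tgt : ℕ → V} {m i : ℕ} {S : Finset V} {v : V}

lemma key_half {E' F' Y : Finset ℕ}
    (hE' : E' ⊆ Finset.range i) (hY : Y ⊆ Finset.range m \ Finset.range i)
    (hPhi : Phi src tgt m S i v E' = Phi src tgt m S i v F')
    (h : SReach src tgt (E' ∪ Y) S v) : SReach src tgt (F' ∪ Y) S v := by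
  have h1 := congrArg (fun z : Finset V × Finset V × Finset (V × V) × Prop => z.1) hPhi
  have h2 := congrArg (fun z : Finset V × Finset V × Finset (V × V) × Prop => z.2.1) hPhi
  have h3 := congrArg (fun z : Finset V × Finset V × Finset (V × V) × Prop => z.2.2.1) hPhi
  have h4 := congrArg (fun z : Finset V × Finset V × Finset (V × V) × Prop => z.2.2.2) hPhi
  simp only [Phi] at h1 h2 h3 h4
  have c1 : ∀ x ∈ front src tgt m i, SReach src tgt E' S x → SReach src tgt F' S x := by
    intro x hx hr
    have hm : x ∈ (front src tgt m i).filter fun x => SReach src tgt E' S x :=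
      Finset.mem_filter.mpr ⟨hx, hr⟩
    rw [h1] at hm
    exact (Finset.mem_filter.mp hm).2
  have c2 : ∀ x ∈ front src tgt m i, Reach src tgt E' x v → Reach src tgt F' x v := by
    intro x hx hr
    have hm : x ∈ (front src tgt m i).filter fun x => Reach src tgt E' x v :=
      Finset.mem_filter.mpr ⟨hx, hr⟩
    rw [h2] at hm
    exact (Finset.mem_filter.mp hm).2
  have c3 : ∀ x y, x ∈ front src tgt m i → ¬ SReach src tgt E' S x →
      (y = v ∨ (y ∈ front src tgt m i ∧ ¬ Reach src tgt E' y v)) →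
      Reach src tgt E' x y → Reach src tgt F' x y := by
    intro x y hx hnS hcol hr
    have hymem : y ∈ front src tgt m i ∪ {v} := by
      rcases hcol with h | h
      · exact Finset.mem_union_right _ (Finset.mem_singleton.mpr h)
      · exact Finset.mem_union_left _ h.1
    have hm : (x, y) ∈ (((front src tgt m i) ∪ {v}) ×ˢ ((front src tgt m i) ∪ {v})).filter
        fun q => (q.1 ∈ front src tgt m i ∧ ¬ SReach src tgt E' S q.1) ∧
          (q.2 = v ∨ (q.2 ∈ front src tgt m i ∧ ¬ Reach src tgt E' q.2 v)) ∧
          Reach src tgt E' q.1 q.2 :=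
      Finset.mem_filter.mpr ⟨Finset.mem_product.mpr ⟨Finset.mem_union_left _ hx, hymem⟩,
        ⟨hx, hnS⟩, hcol, hr⟩
    rw [h3] at hm
    exact (Finset.mem_filter.mp hm).2.2.2
  have c4 : SReach src tgt E' S v → SReach src tgt F' S v := fun hr => h4 ▸ hr
  obtain ⟨s, hs, hr⟩ := h
  obtain ⟨es, hes⟩ := reach_isWalk hr
  exact key_trans hE' hY c1 c2 c3 c4 es.length es s le_rfl hes (Or.inl hs)
    ⟨s, hs, Relation.ReflTransGen.refl⟩

end KeyIff

lemma condP_eval (p : ℕ → ℝ) (m i : ℕ) (him : i ≤ m)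
    (hp : ∀ e ∈ Finset.range m, 0 < p e ∧ p e < 1)
    (A : Finset ℕ) (hA : A ⊆ Finset.range i) (ev : Finset ℕ → Prop) :
    condP p m A (Finset.range i \ A) ev =
      ∑ Y ∈ (Finset.range m \ Finset.range i).powerset,
        if ev (A ∪ Y) then
          (∏ e ∈ Y, p e) * ∏ e ∈ (Finset.range m \ Finset.range i) \ Y, (1 - p e)
        else 0 := by
  set T := Finset.range m \ Finset.range i with hT
  set cA : ℝ := (∏ e ∈ A, p e) * ∏ e ∈ Finset.range i \ A, (1 - p e) with hcA
  set w : Finset ℕ → ℝ := fun Y => (∏ e ∈ Y, p e) * ∏ e ∈ T \ Y, (1 - p e) with hw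
  -- factorization of prW
  have hfact : ∀ Y ∈ T.powerset, prW p m (A ∪ Y) = cA * w Y := by
    intro Y hY
    rw [Finset.mem_powerset] at hY
    have hdisj : Disjoint A Y := by
      rw [Finset.disjoint_left]
      intro a haA haY
      have h1 := Finset.mem_range.mp (hA haA)
      have h2 := hY haY
      rw [hT, Finset.mem_sdiff, Finset.mem_range, Finset.mem_range] at h2
      omega
    have hcompl : Finset.range m \ (A ∪ Y) = (Finset.range i \ A) ∪ (T \ Y) := by
      ext e
      simp only [Finset.mem_sdiff, Finset.mem_union, Finset.mem_range, hT]
      constructor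
      · rintro ⟨hm', hn⟩
        push_neg at hn
        by_cases hi : e < i
        · exact Or.inl ⟨hi, hn.1⟩
        · exact Or.inr ⟨⟨hm', hi⟩, hn.2⟩
      · rintro (⟨hi, ha⟩ | ⟨⟨hm', hi⟩, hy⟩)
        · refine ⟨lt_of_lt_of_le hi him, ?_⟩
          push_neg
          refine ⟨ha, fun hy => ?_⟩
          have := hY hy
          rw [hT, Finset.mem_sdiff, Finset.mem_range, Finset.mem_range] at this
          omega
        · refine ⟨hm', ?_⟩
          push_neg
          refine ⟨fun ha => ?_, hy⟩
          have := Finset.mem_range.mp (hA ha)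
          omega
    have hdisj2 : Disjoint (Finset.range i \ A) (T \ Y) := by
      rw [Finset.disjoint_left]
      intro a ha ha'
      rw [Finset.mem_sdiff, Finset.mem_range] at ha
      rw [hT, Finset.mem_sdiff, Finset.mem_sdiff, Finset.mem_range, Finset.mem_range] at ha'
      omega
    rw [prW, Finset.prod_union hdisj, hcompl, Finset.prod_union hdisj2, hw, hcA]
    ring
  -- reindexing
  have hbij : ∀ f : Finset ℕ → ℝ,
      ∑ X ∈ (Finset.range m).powerset.filter
        (fun X => A ⊆ X ∧ X ∩ (Finset.range i \ A) = ∅), f X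
      = ∑ Y ∈ T.powerset, f (A ∪ Y) := by
    intro f
    refine Finset.sum_nbij' (i := fun X => X \ Finset.range i) (j := fun Y => A ∪ Y)
      ?_ ?_ ?_ ?_ ?_
    · intro X hX
      rw [Finset.mem_filter, Finset.mem_powerset] at hX
      rw [Finset.mem_powerset, hT]
      intro e he
      rw [Finset.mem_sdiff] at he ⊢
      exact ⟨hX.1 he.1, he.2⟩
    · intro Y hY
      rw [Finset.mem_powerset, hT] at hY
      rw [Finset.mem_filter, Finset.mem_powerset]
      refine ⟨?_, Finset.subset_union_left, ?_⟩
      · intro e he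
        rcases Finset.mem_union.mp he with h | h
        · exact Finset.mem_range.mpr (lt_of_lt_of_le (Finset.mem_range.mp (hA h)) him)
        · exact (Finset.mem_sdiff.mp (hY h)).1
      · ext e
        simp only [Finset.mem_inter, Finset.mem_union, Finset.mem_sdiff, Finset.mem_range,
          Finset.notMem_empty, iff_false]
        rintro ⟨h1 | h1, h2, h3⟩
        · exact h3 h1
        · have := hY h1
          rw [Finset.mem_sdiff, Finset.mem_range, Finset.mem_range] at this
          omega
    · intro X hX
      rw [Finset.mem_filter, Finset.mem_powerset] at hX
      obtain ⟨hXm, hAX, hint⟩ := hX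
      ext e
      simp only [Finset.mem_union, Finset.mem_sdiff, Finset.mem_range]
      constructor
      · rintro (h | ⟨h, _⟩)
        · exact hAX h
        · exact h
      · intro he
        by_cases hi : e < i
        · left
          by_contra ha
          have : e ∈ X ∩ (Finset.range i \ A) := by
            rw [Finset.mem_inter, Finset.mem_sdiff, Finset.mem_range]
            exact ⟨he, hi, ha⟩
          rw [hint] at this
          exact absurd this (Finset.notMem_empty e)
        · exact Or.inr ⟨he, hi⟩
    · intro Y hY
      rw [Finset.mem_powerset, hT] at hY
      ext e
      simp only [Finset.mem_sdiff, Finset.mem_union, Finset.mem_range]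
      constructor
      · rintro ⟨h1 | h1, h2⟩
        · exact absurd (Finset.mem_range.mp (hA h1)) h2
        · exact h1
      · intro he
        have := hY he
        rw [Finset.mem_sdiff, Finset.mem_range, Finset.mem_range] at this
        exact ⟨Or.inr he, this.2⟩
    · intro X hX
      rw [Finset.mem_filter, Finset.mem_powerset] at hX
      obtain ⟨hXm, hAX, hint⟩ := hX
      congr 1
      ext e
      simp only [Finset.mem_union, Finset.mem_sdiff, Finset.mem_range]
      constructor
      · intro he
        by_cases hi : e < i
        · left
          by_contra ha
          have : e ∈ X ∩ (Finset.range i \ A) := by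
            rw [Finset.mem_inter, Finset.mem_sdiff, Finset.mem_range]
            exact ⟨he, hi, ha⟩
          rw [hint] at this
          exact absurd this (Finset.notMem_empty e)
        · exact Or.inr ⟨he, hi⟩
      · rintro (h | ⟨h, _⟩)
        · exact hAX h
        · exact h
  -- the sum of w over all subsets of T is 1
  have hsumw : ∑ Y ∈ T.powerset, w Y = 1 := by
    rw [hw]
    rw [← Finset.prod_add p (fun e => 1 - p e) T]
    apply Finset.prod_eq_one
    intro e _
    ring
  -- cA ≠ 0
  have hcA0 : cA ≠ 0 := by
    rw [hcA]
    apply mul_ne_zero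
    · apply Finset.prod_ne_zero_iff.mpr
      intro e he
      exact ne_of_gt (hp e (hA.trans (Finset.range_subset_range.mpr him) he)).1
    · apply Finset.prod_ne_zero_iff.mpr
      intro e he
      have := (hp e ((Finset.sdiff_subset.trans (Finset.range_subset_range.mpr him)) he)).2
      intro h
      rw [sub_eq_zero] at h
      linarith
  -- numerator
  have hnum : (∑ X ∈ (Finset.range m).powerset,
      if A ⊆ X ∧ X ∩ (Finset.range i \ A) = ∅ ∧ ev X then prW p m X else 0)
      = cA * ∑ Y ∈ T.powerset, (if ev (A ∪ Y) then w Y else 0) := by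
    have step1 : (∑ X ∈ (Finset.range m).powerset,
        if A ⊆ X ∧ X ∩ (Finset.range i \ A) = ∅ ∧ ev X then prW p m X else 0)
        = ∑ X ∈ (Finset.range m).powerset.filter
            (fun X => A ⊆ X ∧ X ∩ (Finset.range i \ A) = ∅),
            (if ev X then prW p m X else 0) := by
      rw [Finset.sum_filter]
      apply Finset.sum_congr rfl
      intro X _
      by_cases hc : A ⊆ X ∧ X ∩ (Finset.range i \ A) = ∅ <;>
        by_cases he : ev X <;> simp [hc, he]
    rw [step1, hbij (fun X => if ev X then prW p m X else 0)]
    rw [Finset.mul_sum]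
    apply Finset.sum_congr rfl
    intro Y hY
    by_cases he : ev (A ∪ Y) <;> simp [he, hfact Y hY]
  -- denominator
  have hden : (∑ X ∈ (Finset.range m).powerset,
      if A ⊆ X ∧ X ∩ (Finset.range i \ A) = ∅ then prW p m X else 0) = cA := by
    rw [← Finset.sum_filter, hbij (fun X => prW p m X)]
    rw [Finset.sum_congr rfl hfact, ← Finset.mul_sum, hsumw, mul_one]
  rw [condP, hnum, hden, mul_comm, mul_div_assoc, div_self hcA0, mul_one]

/-- Conditional-probability well-definedness: equal transversal configurations yield
equal conditional reachability probabilities. -/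
theorem stmt14 {V : Type*} [Fintype V] (src tgt : ℕ → V) (p : ℕ → ℝ) (m : ℕ)
    (hp : ∀ e ∈ Finset.range m, 0 < p e ∧ p e < 1)
    (S : Finset V) (i : ℕ) (him : i ≤ m) (v : V) (E' F' : Finset ℕ)
    (hE' : E' ⊆ Finset.range i) (hF' : F' ⊆ Finset.range i)
    (hPhi : Phi src tgt m S i v E' = Phi src tgt m S i v F') :
    condP p m E' (Finset.range i \ E') (fun X => SReach src tgt X S v)
      = condP p m F' (Finset.range i \ F') (fun X => SReach src tgt X S v) := by
  rw [condP_eval p m i him hp E' hE', condP_eval p m i him hp F' hF']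
  apply Finset.sum_congr rfl
  intro Y hY
  exact if_congr ⟨key_half hE' (Finset.mem_powerset.mp hY) hPhi,
    key_half hF' (Finset.mem_powerset.mp hY) hPhi.symm⟩ rfl rfl

end
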